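/- For every integer n ≥ 2, a displacement u : H_n → ℝ² of the hexagonal array of side n produces zero elongation on every edge (κ_u = 0) if and only if u is an infinitesimal rigid motion, i.e. there exist c ∈ ℝ² and t ∈ ℝ such that u(p) = c + t·J(e(p)) for all p ∈ H_n, where J is rotation of the plane by 90°. In particular the kernel of the elongation map R : (ℝ²)^{H_n} → ℝ^{Edges}, R(u) = κ_u, has dimension 3. -/

import Mathlib

open scoped Classical

/-- The hexagonal array of side `n`: nodes `(i,j) ∈ ℤ²` with `|i| ≤ n-1`, `|j| ≤ n-1`,
`|i+j| ≤ n-1`. -/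
noncomputable def hexNodes (n : ℤ) : Finset (ℤ × ℤ) :=
  (Finset.Icc ((-(n-1), -(n-1)) : ℤ × ℤ) ((n-1, n-1) : ℤ × ℤ)).filter
    (fun p => |p.1 + p.2| ≤ n - 1)

/-- The three lattice directions `(1,0)`, `(0,1)`, `(-1,1)`. -/
def hexDirs : Finset (ℤ × ℤ) := {(1,0), (0,1), (-1,1)}

/-- The edges of the hexagonal array of side `n`: unordered pairs `{p, p+d}` with both
endpoints in `hexNodes n` and `d` one of the three lattice directions. -/
noncomputable def hexEdges (n : ℤ) : Finset (Sym2 (ℤ × ℤ)) :=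
  (((hexNodes n) ×ˢ hexDirs).filter (fun pd => pd.1 + pd.2 ∈ hexNodes n)).image
    (fun pd => s(pd.1, pd.1 + pd.2))

/-- Interior nodes: all six neighbors lie in the array. -/
noncomputable def interiorNodes (n : ℤ) : Finset (ℤ × ℤ) :=
  (hexNodes n).filter (fun p => ∀ d ∈ hexDirs, p + d ∈ hexNodes n ∧ p - d ∈ hexNodes n)

/-- Embedding of the lattice in the Euclidean plane: `e(i,j) = i·(1,0) + j·(1/2, √3/2)`,
so that every edge has unit length. -/
noncomputable def emb (p : ℤ × ℤ) : ℝ × ℝ :=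
  ((p.1 : ℝ) + (p.2 : ℝ) / 2, (p.2 : ℝ) * (Real.sqrt 3 / 2))

/-- The Euclidean inner product on `ℝ²`. -/
def dot (a b : ℝ × ℝ) : ℝ := a.1 * b.1 + a.2 * b.2

/-- The elongation of the unordered pair `{p, q}` induced by a displacement `u`:
`κ_u({p,q}) = (e(q) - e(p)) · (u(q) - u(p))`. -/
noncomputable def kap (u : ℤ × ℤ → ℝ × ℝ) : Sym2 (ℤ × ℤ) → ℝ :=
  Sym2.lift ⟨fun p q => dot (emb q - emb p) (u q - u p), fun p q => by
    simp only [dot, Prod.fst_sub, Prod.snd_sub]; ring⟩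

/-- Rotation of the plane by 90 degrees. -/
def rot90 (a : ℝ × ℝ) : ℝ × ℝ := (-a.2, a.1)

/-- The elongation map as a linear map in the displacement. -/
noncomputable def kapL : (ℤ × ℤ → ℝ × ℝ) →ₗ[ℝ] (Sym2 (ℤ × ℤ) → ℝ) where
  toFun := kap
  map_add' x y := by
    funext e
    induction e using Sym2.ind with
    | _ p q => simp [kap, dot]; ring
  map_smul' c x := by
    funext e
    induction e using Sym2.ind with
    | _ p q => simp [kap, dot]; ring

/-- Extension by zero of a displacement defined on the nodes of the array. -/
noncomputable def extendL (n : ℤ) :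
    ({p : ℤ × ℤ // p ∈ hexNodes n} → ℝ × ℝ) →ₗ[ℝ] (ℤ × ℤ → ℝ × ℝ) where
  toFun u p := if h : p ∈ hexNodes n then u ⟨p, h⟩ else 0
  map_add' x y := by funext p; by_cases h : p ∈ hexNodes n <;> simp [h]
  map_smul' c x := by funext p; by_cases h : p ∈ hexNodes n <;> simp [h]

/-- The elongation map `R : (ℝ²)^{H_n} → ℝ^{Edges}`, `R(u) = κ_u`. -/
noncomputable def Rmap (n : ℤ) :
    ({p : ℤ × ℤ // p ∈ hexNodes n} → ℝ × ℝ) →ₗ[ℝ] ({e : Sym2 (ℤ × ℤ) // e ∈ hexEdges n} → ℝ) :=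
  (LinearMap.funLeft ℝ ℝ (Subtype.val : {e : Sym2 (ℤ × ℤ) // e ∈ hexEdges n} → Sym2 (ℤ × ℤ))).comp
    (kapL.comp (extendL n))

/- ### auxiliary lemmas -/

lemma mem_hexNodes {n i j : ℤ} : ((i,j) : ℤ×ℤ) ∈ hexNodes n ↔
    -(n-1) ≤ i ∧ i ≤ n-1 ∧ -(n-1) ≤ j ∧ j ≤ n-1 ∧ -(n-1) ≤ i+j ∧ i+j ≤ n-1 := by
  simp [hexNodes, Finset.mem_filter, Finset.mem_Icc, Prod.le_def, abs_le]
  rcases abs_cases (i+j) with h | h <;> omega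

lemma mem_dirs10 : ((1,0) : ℤ×ℤ) ∈ hexDirs := by decide
lemma mem_dirs01 : ((0,1) : ℤ×ℤ) ∈ hexDirs := by decide
lemma mem_dirsm11 : ((-1,1) : ℤ×ℤ) ∈ hexDirs := by decide

lemma edge_mem {n : ℤ} {p q d : ℤ×ℤ} (hd : d ∈ hexDirs)
    (hp : p ∈ hexNodes n) (hq : q ∈ hexNodes n) (h : q = p + d ∨ p = q + d) :
    s(p,q) ∈ hexEdges n := by
  rcases h with h | h
  · subst h
    exact Finset.mem_image.mpr ⟨(p, d), Finset.mem_filter.mpr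
      ⟨Finset.mem_product.mpr ⟨hp, hd⟩, hq⟩, rfl⟩
  · subst h
    rw [Sym2.eq_swap]
    exact Finset.mem_image.mpr ⟨(q, d), Finset.mem_filter.mpr
      ⟨Finset.mem_product.mpr ⟨hq, hd⟩, hp⟩, rfl⟩

lemma kap_pair (u : ℤ×ℤ → ℝ×ℝ) (p q : ℤ×ℤ) :
    kap u s(p,q) = dot (emb q - emb p) (u q - u p) := by simp [kap]

lemma solve2 (v1 v2 w : ℝ×ℝ) (hdet : v1.1*v2.2 - v1.2*v2.1 ≠ 0)
    (h1 : v1.1*w.1 + v1.2*w.2 = 0) (h2 : v2.1*w.1 + v2.2*w.2 = 0) : w = 0 := by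
  have hw1 : w.1 * (v1.1*v2.2 - v1.2*v2.1) = 0 := by linear_combination v2.2*h1 - v1.2*h2
  have hw2 : w.2 * (v1.1*v2.2 - v1.2*v2.1) = 0 := by linear_combination v1.1*h2 - v2.1*h1
  exact Prod.ext ((mul_eq_zero.mp hw1).resolve_right hdet)
    ((mul_eq_zero.mp hw2).resolve_right hdet)

lemma emb_sub (p q : ℤ×ℤ) : emb q - emb p = emb (q - p) := by
  apply Prod.ext <;> simp [emb] <;> push_cast <;> ring

lemma det_emb {p q r : ℤ×ℤ} {a b a' b' : ℤ} (h1 : r - p = (a,b)) (h2 : r - q = (a',b'))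
    (h : a * b' - b * a' ≠ 0) :
    (emb r - emb p).1 * (emb r - emb q).2 - (emb r - emb p).2 * (emb r - emb q).1 ≠ 0 := by
  rw [emb_sub, emb_sub, h1, h2]
  have he : (emb (a,b)).1 * (emb (a',b')).2 - (emb (a,b)).2 * (emb (a',b')).1
      = ((a*b' - b*a' : ℤ) : ℝ) * (Real.sqrt 3 / 2) := by
    simp only [emb]; push_cast; ring
  rw [he]
  exact mul_ne_zero (by exact_mod_cast h) (by positivity)

lemma tri {n : ℤ} {u : ℤ×ℤ → ℝ×ℝ} {c : ℝ×ℝ} {t : ℝ}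
    (hk : ∀ e ∈ hexEdges n, kap u e = 0)
    {p q r d1 d2 : ℤ×ℤ}
    (hd1 : d1 ∈ hexDirs) (hd2 : d2 ∈ hexDirs)
    (hp' : p ∈ hexNodes n) (hq' : q ∈ hexNodes n) (hr' : r ∈ hexNodes n)
    (h1 : r = p + d1 ∨ p = r + d1) (h2 : r = q + d2 ∨ q = r + d2)
    (hdet : (emb r - emb p).1 * (emb r - emb q).2
      - (emb r - emb p).2 * (emb r - emb q).1 ≠ 0)
    (hp : u p = c + t • rot90 (emb p)) (hq : u q = c + t • rot90 (emb q)) :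
    u r = c + t • rot90 (emb r) := by
  have e1 : dot (emb r - emb p) (u r - u p) = 0 := by
    rw [← kap_pair]; exact hk _ (edge_mem hd1 hp' hr' h1)
  have e2 : dot (emb r - emb q) (u r - u q) = 0 := by
    rw [← kap_pair]; exact hk _ (edge_mem hd2 hq' hr' h2)
  have key : u r - (c + t • rot90 (emb r)) = 0 := by
    apply solve2 (emb r - emb p) (emb r - emb q) _ hdet
    · rw [hp] at e1
      simp only [dot, rot90, Prod.fst_sub, Prod.snd_sub, Prod.fst_add, Prod.snd_add,
        Prod.smul_fst, Prod.smul_snd, smul_eq_mul] at e1 ⊢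
      linear_combination e1
    · rw [hq] at e2
      simp only [dot, rot90, Prod.fst_sub, Prod.snd_sub, Prod.fst_add, Prod.snd_add,
        Prod.smul_fst, Prod.smul_snd, smul_eq_mul] at e2 ⊢
      linear_combination e2
  exact sub_eq_zero.mp key

lemma rigid_of_kap_zero {n : ℤ} (hn : 2 ≤ n) {u : ℤ×ℤ → ℝ×ℝ}
    (hk : ∀ e ∈ hexEdges n, kap u e = 0) :
    ∃ (c : ℝ×ℝ) (t : ℝ), ∀ p ∈ hexNodes n, u p = c + t • rot90 (emb p) := by
  set c : ℝ×ℝ := u (0,0) with hc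
  set t : ℝ := (u (1,0)).2 - (u (0,0)).2 with ht
  refine ⟨c, t, ?_⟩
  have mem00 : ((0,0) : ℤ×ℤ) ∈ hexNodes n := mem_hexNodes.mpr (by omega)
  have mem10 : ((1,0) : ℤ×ℤ) ∈ hexNodes n := mem_hexNodes.mpr (by omega)
  have h00 : u (0,0) = c + t • rot90 (emb (0,0)) := by
    apply Prod.ext <;> simp [emb, rot90, hc]
  have e0 : dot (emb (1,0) - emb (0,0)) (u (1,0) - u (0,0)) = 0 := by
    rw [← kap_pair]
    exact hk _ (edge_mem mem_dirs10 mem00 mem10 (Or.inl (by norm_num)))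
  have h10 : u (1,0) = c + t • rot90 (emb (1,0)) := by
    simp only [dot, emb, rot90, Prod.fst_sub, Prod.snd_sub] at e0
    norm_num at e0
    apply Prod.ext <;>
      simp only [emb, rot90, Prod.fst_add, Prod.snd_add, Prod.smul_fst, Prod.smul_snd,
        smul_eq_mul, hc, ht] <;> norm_num
    · linarith
  have h01 : u (0,1) = c + t • rot90 (emb (0,1)) := by
    refine tri hk mem_dirs01 mem_dirsm11 mem00 mem10 (mem_hexNodes.mpr (by omega))
      (Or.inl (by norm_num)) (Or.inl (by norm_num))
      (det_emb (a := 0) (b := 1) (a' := -1) (b' := 1) (by norm_num) (by norm_num) (by norm_num))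
      h00 h10
  -- rightward zigzag
  have A : ∀ i : ℤ, 0 ≤ i → i ≤ n-2 →
      (u (i,0) = c + t • rot90 (emb (i,0)) ∧ u (i,1) = c + t • rot90 (emb (i,1))) := by
    intro i hi
    refine Int.le_induction (motive := fun i _ => i ≤ n-2 →
        (u (i,0) = c + t • rot90 (emb (i,0)) ∧ u (i,1) = c + t • rot90 (emb (i,1)))) ?_ ?_ i hi
    · intro _; exact ⟨h00, h01⟩
    · intro i hi IH hle
      obtain ⟨P1, P2⟩ := IH (by omega)
      have m1 : ((i,0) : ℤ×ℤ) ∈ hexNodes n := mem_hexNodes.mpr (by omega)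
      have m2 : ((i,1) : ℤ×ℤ) ∈ hexNodes n := mem_hexNodes.mpr (by omega)
      have m3 : ((i+1,0) : ℤ×ℤ) ∈ hexNodes n := mem_hexNodes.mpr (by omega)
      have m4 : ((i+1,1) : ℤ×ℤ) ∈ hexNodes n := mem_hexNodes.mpr (by omega)
      have Q1 : u (i+1,0) = c + t • rot90 (emb (i+1,0)) := by
        refine tri hk mem_dirs10 mem_dirsm11 m1 m2 m3
          (Or.inl (by simp [Prod.ext_iff] <;> omega))
          (Or.inr (by simp [Prod.ext_iff] <;> omega))
          (det_emb (a := 1) (b := 0) (a' := 1) (b' := -1)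
            (by simp [Prod.ext_iff] <;> omega)
            (by simp [Prod.ext_iff] <;> omega) (by norm_num))
          P1 P2
      have Q2 : u (i+1,1) = c + t • rot90 (emb (i+1,1)) := by
        refine tri hk mem_dirs01 mem_dirs10 m3 m2 m4
          (Or.inl (by simp [Prod.ext_iff] <;> omega))
          (Or.inl (by simp [Prod.ext_iff] <;> omega))
          (det_emb (a := 0) (b := 1) (a' := 1) (b' := 0)
            (by simp [Prod.ext_iff] <;> omega)
            (by simp [Prod.ext_iff] <;> omega) (by norm_num))
          Q1 P2
      exact ⟨Q1, Q2⟩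
  -- leftward zigzag
  have B : ∀ i : ℤ, i ≤ 0 → -(n-1) ≤ i →
      (u (i,0) = c + t • rot90 (emb (i,0)) ∧ u (i,1) = c + t • rot90 (emb (i,1))) := by
    intro i hi
    refine Int.le_induction_down (motive := fun i _ => -(n-1) ≤ i →
        (u (i,0) = c + t • rot90 (emb (i,0)) ∧ u (i,1) = c + t • rot90 (emb (i,1)))) ?_ ?_ i hi
    · intro _; exact ⟨h00, h01⟩
    · intro i hi IH hle
      obtain ⟨P1, P2⟩ := IH (by omega)
      have m1 : ((i,0) : ℤ×ℤ) ∈ hexNodes n := mem_hexNodes.mpr (by omega)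
      have m2 : ((i,1) : ℤ×ℤ) ∈ hexNodes n := mem_hexNodes.mpr (by omega)
      have m3 : ((i-1,1) : ℤ×ℤ) ∈ hexNodes n := mem_hexNodes.mpr (by omega)
      have m4 : ((i-1,0) : ℤ×ℤ) ∈ hexNodes n := mem_hexNodes.mpr (by omega)
      have Q2 : u (i-1,1) = c + t • rot90 (emb (i-1,1)) := by
        refine tri hk mem_dirsm11 mem_dirs10 m1 m2 m3
          (Or.inl (by simp [Prod.ext_iff] <;> omega))
          (Or.inr (by simp [Prod.ext_iff] <;> omega))
          (det_emb (a := -1) (b := 1) (a' := -1) (b' := 0)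
            (by simp [Prod.ext_iff] <;> omega)
            (by simp [Prod.ext_iff] <;> omega) (by norm_num))
          P1 P2
      have Q1 : u (i-1,0) = c + t • rot90 (emb (i-1,0)) := by
        refine tri hk mem_dirs01 mem_dirs10 m3 m1 m4
          (Or.inr (by simp [Prod.ext_iff] <;> omega))
          (Or.inr (by simp [Prod.ext_iff] <;> omega))
          (det_emb (a := 0) (b := -1) (a' := -1) (b' := 0)
            (by simp [Prod.ext_iff] <;> omega)
            (by simp [Prod.ext_iff] <;> omega) (by norm_num))
          Q2 P1
      exact ⟨Q1, Q2⟩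
  -- full row 0
  have row0 : ∀ i : ℤ, -(n-1) ≤ i → i ≤ n-1 → u (i,0) = c + t • rot90 (emb (i,0)) := by
    intro i h1 h2
    rcases le_or_gt i 0 with h | h
    · exact (B i h h1).1
    rcases lt_or_ge i (n-1) with h' | h'
    · exact (A i (by omega) (by omega)).1
    have hieq : i = n-1 := le_antisymm h2 h'
    subst hieq
    obtain ⟨P1, P2⟩ := A (n-2) (by omega) (by omega)
    refine tri hk mem_dirs10 mem_dirsm11
      (mem_hexNodes.mpr (by omega)) (mem_hexNodes.mpr (by omega)) (mem_hexNodes.mpr (by omega))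
      (Or.inl (by simp [Prod.ext_iff] <;> omega))
      (Or.inr (by simp [Prod.ext_iff] <;> omega))
      (det_emb (a := 1) (b := 0) (a' := 1) (b' := -1)
        (by simp [Prod.ext_iff] <;> omega)
        (by simp [Prod.ext_iff] <;> omega) (by norm_num))
      P1 P2
  -- upward propagation
  have up : ∀ j : ℤ, 0 ≤ j → ∀ i : ℤ, ((i,j) : ℤ×ℤ) ∈ hexNodes n →
      u (i,j) = c + t • rot90 (emb (i,j)) := by
    intro j hj
    refine Int.le_induction (motive := fun j _ => ∀ i : ℤ, ((i,j) : ℤ×ℤ) ∈ hexNodes n →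
        u (i,j) = c + t • rot90 (emb (i,j))) ?_ ?_ j hj
    · intro i hmem
      rw [mem_hexNodes] at hmem
      exact row0 i (by omega) (by omega)
    · intro j hj IH i hmem
      rw [mem_hexNodes] at hmem
      have hp := IH i (mem_hexNodes.mpr (by omega))
      have hq := IH (i+1) (mem_hexNodes.mpr (by omega))
      refine tri hk mem_dirs01 mem_dirsm11
        (mem_hexNodes.mpr (by omega)) (mem_hexNodes.mpr (by omega)) (mem_hexNodes.mpr (by omega))
        (Or.inl (by simp [Prod.ext_iff] <;> omega))
        (Or.inl (by simp [Prod.ext_iff] <;> omega))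
        (det_emb (a := 0) (b := 1) (a' := -1) (b' := 1)
          (by simp [Prod.ext_iff] <;> omega)
          (by simp [Prod.ext_iff] <;> omega) (by norm_num))
        hp hq
  -- downward propagation
  have down : ∀ j : ℤ, j ≤ 0 → ∀ i : ℤ, ((i,j) : ℤ×ℤ) ∈ hexNodes n →
      u (i,j) = c + t • rot90 (emb (i,j)) := by
    intro j hj
    refine Int.le_induction_down (motive := fun j _ => ∀ i : ℤ, ((i,j) : ℤ×ℤ) ∈ hexNodes n →
        u (i,j) = c + t • rot90 (emb (i,j))) ?_ ?_ j hj
    · intro i hmem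
      rw [mem_hexNodes] at hmem
      exact row0 i (by omega) (by omega)
    · intro j hj IH i hmem
      rw [mem_hexNodes] at hmem
      have hp := IH i (mem_hexNodes.mpr (by omega))
      have hq := IH (i-1) (mem_hexNodes.mpr (by omega))
      refine tri hk mem_dirs01 mem_dirsm11
        (mem_hexNodes.mpr (by omega)) (mem_hexNodes.mpr (by omega)) (mem_hexNodes.mpr (by omega))
        (Or.inr (by simp [Prod.ext_iff] <;> omega))
        (Or.inr (by simp [Prod.ext_iff] <;> omega))
        (det_emb (a := 0) (b := -1) (a' := 1) (b' := -1)
          (by simp [Prod.ext_iff] <;> omega)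
          (by simp [Prod.ext_iff] <;> omega) (by norm_num))
        hp hq
  rintro ⟨i, j⟩ hp
  rcases le_or_gt 0 j with h | h
  · exact up j h i hp
  · exact down j (by omega) i hp

lemma kap_zero_of_rigid {n : ℤ} {u : ℤ×ℤ → ℝ×ℝ} {c : ℝ×ℝ} {t : ℝ}
    (h : ∀ p ∈ hexNodes n, u p = c + t • rot90 (emb p)) :
    ∀ e ∈ hexEdges n, kap u e = 0 := by
  intro e he
  obtain ⟨⟨p, d⟩, hmem, rfl⟩ := Finset.mem_image.mp he
  obtain ⟨hprod, hpd⟩ := Finset.mem_filter.mp hmem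
  obtain ⟨hp, -⟩ := Finset.mem_product.mp hprod
  rw [kap_pair, h p hp, h (p+d) hpd]
  simp only [dot, rot90, Prod.fst_sub, Prod.snd_sub, Prod.fst_add, Prod.snd_add,
    Prod.smul_fst, Prod.smul_snd, smul_eq_mul]
  ring

noncomputable def rigidL (n : ℤ) : ((ℝ×ℝ) × ℝ) →ₗ[ℝ] ({p : ℤ×ℤ // p ∈ hexNodes n} → ℝ×ℝ) where
  toFun ct p := ct.1 + ct.2 • rot90 (emb p.val)
  map_add' x y := by
    funext p
    show (x.1 + y.1) + (x.2 + y.2) • rot90 (emb p.val) = _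
    rw [add_smul]
    simp only [Pi.add_apply]
    abel
  map_smul' a x := by
    funext p
    show (a • x.1) + (a * x.2) • rot90 (emb p.val) = a • (x.1 + x.2 • rot90 (emb p.val))
    rw [smul_add, mul_smul]

/-- for `n ≥ 2`, a displacement produces zero elongation on every edge iff it
is an infinitesimal rigid motion `u(p) = c + t·J(e(p))` on the nodes; in particular the
kernel of the elongation map `R` has dimension 3. -/
theorem kernel_of_elongation_map (n : ℤ) (hn : 2 ≤ n) :
    (∀ u : ℤ × ℤ → ℝ × ℝ,
      (∀ e ∈ hexEdges n, kap u e = 0) ↔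
        ∃ (c : ℝ × ℝ) (t : ℝ), ∀ p ∈ hexNodes n, u p = c + t • rot90 (emb p)) ∧
    Module.finrank ℝ (LinearMap.ker (Rmap n)) = 3 := by
  have hiff : ∀ u : ℤ × ℤ → ℝ × ℝ,
      (∀ e ∈ hexEdges n, kap u e = 0) ↔
        ∃ (c : ℝ × ℝ) (t : ℝ), ∀ p ∈ hexNodes n, u p = c + t • rot90 (emb p) := by
    intro u
    exact ⟨fun hk => rigid_of_kap_zero hn hk, fun ⟨c, t, h⟩ => kap_zero_of_rigid h⟩
  refine ⟨hiff, ?_⟩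
  have mem00 : ((0,0) : ℤ×ℤ) ∈ hexNodes n := mem_hexNodes.mpr (by omega)
  have mem10 : ((1,0) : ℤ×ℤ) ∈ hexNodes n := mem_hexNodes.mpr (by omega)
  have hker : LinearMap.ker (Rmap n) = LinearMap.range (rigidL n) := by
    ext u
    simp only [LinearMap.mem_ker, LinearMap.mem_range]
    constructor
    · intro h
      have h' : ∀ e ∈ hexEdges n, kap ((extendL n) u) e = 0 := by
        intro e he
        exact congrFun h ⟨e, he⟩
      obtain ⟨c, t, hct⟩ := (hiff _).mp h'
      refine ⟨(c, t), ?_⟩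
      funext p
      have h2 := hct p.val p.2
      have h3 : (extendL n) u p.val = u p := by
        simp [extendL, dif_pos p.2]
      rw [h3] at h2
      exact h2.symm
    · rintro ⟨⟨c, t⟩, hct⟩
      have hu : ∀ p ∈ hexNodes n, (extendL n) u p = c + t • rot90 (emb p) := by
        intro p hp
        have : (extendL n) u p = u ⟨p, hp⟩ := by simp [extendL, dif_pos hp]
        rw [this, ← hct]
        rfl
      funext e
      exact kap_zero_of_rigid hu e.val e.2
  have hinj : Function.Injective (rigidL n) := by
    intro x y h
    have h0 := congrFun h ⟨(0,0), mem00⟩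
    have h1 := congrFun h ⟨(1,0), mem10⟩
    simp only [rigidL, LinearMap.coe_mk, AddHom.coe_mk, emb, rot90] at h0 h1
    norm_num at h0 h1
    obtain ⟨x1, x2⟩ := x
    obtain ⟨y1, y2⟩ := y
    simp only [Prod.ext_iff, Prod.fst_add, Prod.snd_add, Prod.smul_fst, Prod.smul_snd,
      smul_eq_mul] at h0 h1 ⊢
    norm_num at h0 h1 ⊢
    constructor
    · exact ⟨by linarith [h0.1, h1.1], by linarith [h0.2]⟩
    · linarith [h0.2, h1.2]
  rw [hker, LinearMap.finrank_range_of_inj hinj]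
  simp [Module.finrank_prod]
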